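/- Let 𝓔, 𝓕, 𝓖, 𝓗, 𝓖̃, 𝓗̃ be vector spaces over a field k and let A : 𝓔 → 𝓕, B : 𝓖 → 𝓗, C : 𝓖̃ → 𝓗̃ be linear maps. Suppose A is a silvern transmutation of B by philosopher's stone (P₁,Q₁,R₁,S₁,T₁) (with P₁ : 𝓖 → 𝓔, Q₁ : 𝓔 → 𝓖, R₁ : 𝓗 → 𝓕, S₁ : 𝓕 → 𝓗, T₁ : 𝓕 → 𝓔) and B is a silvern transmutation of C by philosopher's stone (P₂,Q₂,R₂,S₂,T₂) (with P₂ : 𝓖̃ → 𝓖, Q₂ : 𝓖 → 𝓖̃, R₂ : 𝓗̃ → 𝓗, S₂ : 𝓗 → 𝓗̃, T₂ : 𝓗 → 𝓖). Then A is a silvern transmutation of C by philosopher's stone (P₁∘P₂, Q₂∘Q₁, R₁∘R₂, S₂∘S₁, T₁ + P₁∘T₂∘S₁). Moreover, if both given transmutations are proper silvern transmutations, then so is the resulting one. -/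
import Mathlib


/-- Transitivity of silvern transmutations: if `A` is a silvern transmutation of `B` by
`(P₁,Q₁,R₁,S₁,T₁)` and `B` is a silvern transmutation of `C` by `(P₂,Q₂,R₂,S₂,T₂)`, then
`A` is a silvern transmutation of `C` by `(P₁∘P₂, Q₂∘Q₁, R₁∘R₂, S₂∘S₁, T₁ + P₁∘T₂∘S₁)`;
if moreover both are proper then so is the composite. -/
theorem silvern_trans
    {k : Type*} [Field k]
    {E F G H G' H' : Type*}
    [AddCommGroup E] [Module k E] [AddCommGroup F] [Module k F]
    [AddCommGroup G] [Module k G] [AddCommGroup H] [Module k H]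
    [AddCommGroup G'] [Module k G'] [AddCommGroup H'] [Module k H']
    (A : E →ₗ[k] F) (B : G →ₗ[k] H) (C : G' →ₗ[k] H')
    (P₁ : G →ₗ[k] E) (Q₁ : E →ₗ[k] G) (R₁ : H →ₗ[k] F) (S₁ : F →ₗ[k] H) (T₁ : F →ₗ[k] E)
    (P₂ : G' →ₗ[k] G) (Q₂ : G →ₗ[k] G') (R₂ : H' →ₗ[k] H) (S₂ : H →ₗ[k] H') (T₂ : H →ₗ[k] G)
    (hpost₁ : A ∘ₗ P₁ = R₁ ∘ₗ B)
    (hpre₁ : B ∘ₗ Q₁ = S₁ ∘ₗ A)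
    (hreg₁ : P₁ ∘ₗ Q₁ + T₁ ∘ₗ A = LinearMap.id)
    (hpost₂ : B ∘ₗ P₂ = R₂ ∘ₗ C)
    (hpre₂ : C ∘ₗ Q₂ = S₂ ∘ₗ B)
    (hreg₂ : P₂ ∘ₗ Q₂ + T₂ ∘ₗ B = LinearMap.id) :
    A ∘ₗ (P₁ ∘ₗ P₂) = (R₁ ∘ₗ R₂) ∘ₗ C ∧
    C ∘ₗ (Q₂ ∘ₗ Q₁) = (S₂ ∘ₗ S₁) ∘ₗ A ∧
    (P₁ ∘ₗ P₂) ∘ₗ (Q₂ ∘ₗ Q₁) + (T₁ + P₁ ∘ₗ T₂ ∘ₗ S₁) ∘ₗ A = LinearMap.id ∧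
    (LinearMap.ker B ⊓ LinearMap.ker P₁ = ⊥ →
     LinearMap.ker C ⊓ LinearMap.ker P₂ = ⊥ →
     LinearMap.ker C ⊓ LinearMap.ker (P₁ ∘ₗ P₂) = ⊥) := by
  refine ⟨?_, ?_, ?_, ?_⟩
  · calc A ∘ₗ (P₁ ∘ₗ P₂) = (A ∘ₗ P₁) ∘ₗ P₂ := by rw [LinearMap.comp_assoc]
      _ = (R₁ ∘ₗ B) ∘ₗ P₂ := by rw [hpost₁]
      _ = R₁ ∘ₗ (B ∘ₗ P₂) := by rw [LinearMap.comp_assoc]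
      _ = R₁ ∘ₗ (R₂ ∘ₗ C) := by rw [hpost₂]
      _ = (R₁ ∘ₗ R₂) ∘ₗ C := by rw [LinearMap.comp_assoc]
  · calc C ∘ₗ (Q₂ ∘ₗ Q₁) = (C ∘ₗ Q₂) ∘ₗ Q₁ := by rw [LinearMap.comp_assoc]
      _ = (S₂ ∘ₗ B) ∘ₗ Q₁ := by rw [hpre₂]
      _ = S₂ ∘ₗ (B ∘ₗ Q₁) := by rw [LinearMap.comp_assoc]
      _ = S₂ ∘ₗ (S₁ ∘ₗ A) := by rw [hpre₁]
      _ = (S₂ ∘ₗ S₁) ∘ₗ A := by rw [LinearMap.comp_assoc]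
  · ext x
    have h1 := DFunLike.congr_fun hreg₁ x
    have h2 := DFunLike.congr_fun hreg₂ (Q₁ x)
    have h3 := DFunLike.congr_fun hpre₁ x
    simp only [LinearMap.add_apply, LinearMap.comp_apply, LinearMap.id_apply] at *
    rw [← h3, add_comm (T₁ (A x)), ← add_assoc, ← map_add, h2, h1]
  · intro h1 h2
    rw [Submodule.eq_bot_iff] at *
    intro x hx
    obtain ⟨hc, hp⟩ := Submodule.mem_inf.mp hx
    rw [LinearMap.mem_ker] at hc hp
    rw [LinearMap.comp_apply] at hp
    have hb : B (P₂ x) = 0 := by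
      have := DFunLike.congr_fun hpost₂ x
      simp only [LinearMap.comp_apply] at this
      rw [this, hc, map_zero]
    have hp2 : P₂ x = 0 := h1 _ (Submodule.mem_inf.mpr ⟨hb, hp⟩)
    exact h2 x (Submodule.mem_inf.mpr ⟨hc, hp2⟩)
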